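/- Let η = (t₁-t₂)^{-2}dt₁dt₂ + Σ_{i≥1} t₁^{i-1}dt₁·df_i(t₂) with f_i ∈ k[[t]]. Then the map S_η : K → Ω_K, f ↦ res₁(π₁*(f)·η), vanishes on k[[t]] and sends t^{-n} (n > 0) to d(-t^{-n} + f_n). -/

import Mathlib

/- `K = k((t))` is modelled by `LaurentSeries k`; `t^n` is `HahnSeries.single n 1`. -/

variable {k : Type*} [Field k] [CharZero k]

/-- The formal derivative `f'` of a Laurent series `f ∈ k((t))`. -/
noncomputable def lD (f : LaurentSeries k) : LaurentSeries k where
  coeff n := (n + 1 : ℤ) • f.coeff (n + 1)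
  isPWO_support' := by
    refine (f.isPWO_support'.image_of_monotone
      (fun a b h => by simpa using sub_le_sub_right h 1 : Monotone (fun a : ℤ => a - 1))).mono ?_
    intro n hn
    simp only [Function.mem_support] at hn
    exact ⟨n + 1, by intro h; apply hn; simp [h], by ring⟩

/-- The residue pairing `⟨f|g⟩ := res (f·g' dt)`, i.e. the coefficient of `t⁻¹` in `f·g'`. -/
noncomputable def resPairing (f g : LaurentSeries k) : k := (f * lD g).coeff (-1)

/-- `S_η(f)`, for `η = (t₁-t₂)⁻²dt₁dt₂ + Σ_{i≥1} t₁^{i-1}dt₁·df_i(t₂)`, written out in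
coefficients: the coefficient of `t₂^b dt₂` in `res₁(π₁*(f)·η)`.  The term of `f(t₁)·η`
with `t₁`-exponent `-1` coming from `f.coeff m · t₁^m` uses `t₁`-exponent `a = -1-m` of
`η`; the `(t₁-t₂)⁻²`-part contributes `(a+1) = -m` at `t₂`-exponent `-2-a = m-1`
(only for `a ≥ 0`, i.e. `m < 0`), and the `t₁^{i-1}df_i(t₂)`-part contributes
`f_{-m}'(t₂)` (only for `i = -m ≥ 1`). -/
noncomputable def Seta (fseq : ℕ → LaurentSeries k) (f : LaurentSeries k) (b : ℤ) : k :=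
  ∑ᶠ m : ℤ, f.coeff m *
    ((if b = m - 1 ∧ m < 0 then ((-m : ℤ) : k) else 0) +
     (if m < 0 then (lD (fseq (-m).toNat)).coeff b else 0))

/-- The map `S_η : f ↦ res₁(π₁*(f)·η)` vanishes on `k[[t]]` and sends `t^{-n}` (`n > 0`)
to `d(-t^{-n} + f_n)`. -/
theorem Seta_vanishes_and_on_monomials (fseq : ℕ → LaurentSeries k)
    (hreg : ∀ i, ∀ n < 0, (fseq i).coeff n = 0) :
    (∀ f : LaurentSeries k, (∀ n < 0, f.coeff n = 0) → ∀ b : ℤ, Seta fseq f b = 0) ∧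
    (∀ n : ℕ, 0 < n → ∀ b : ℤ,
      Seta fseq (HahnSeries.single (-(n : ℤ)) 1) b
        = (lD (-(HahnSeries.single (-(n : ℤ)) 1) + fseq n)).coeff b) := by

  constructor
  · intro f hf b
    have h : ∀ m : ℤ, f.coeff m *
        ((if b = m - 1 ∧ m < 0 then ((-m : ℤ) : k) else 0) +
         (if m < 0 then (lD (fseq (-m).toNat)).coeff b else 0)) = 0 := by
      intro m
      by_cases hm : m < 0
      · rw [hf m hm]; ring
      · simp [hm]
    simp only [Seta, h, finsum_zero]
  · intro n hn b
    have hneg : -(n : ℤ) < 0 := by exact_mod_cast neg_neg_of_pos (by exact_mod_cast hn)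
    have key : Seta fseq (HahnSeries.single (-(n : ℤ)) (1 : k)) b =
        (if b = -(n : ℤ) - 1 ∧ -(n : ℤ) < 0 then ((n : ℤ) : k) else 0) +
        (lD (fseq n)).coeff b := by
      rw [Seta, finsum_eq_single _ (-(n : ℤ))]
      · simp [HahnSeries.coeff_single_same, hneg, hn.ne']
      · intro m hm
        rw [HahnSeries.coeff_single_of_ne hm]
        ring
    rw [key]
    simp only [lD, HahnSeries.coeff_neg, HahnSeries.coeff_add, HahnSeries.coeff_neg']
    by_cases hb : b = -(n : ℤ) - 1
    · have hb1 : b + 1 = -(n : ℤ) := by omega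
      rw [hb1, HahnSeries.coeff_single_same, hreg n _ hneg]
      simp only [hb, hneg, and_self, if_true, hb1, smul_zero, zsmul_eq_mul]
      push_cast
      ring
    · have hb1 : b + 1 ≠ -(n : ℤ) := by omega
      rw [HahnSeries.coeff_single_of_ne hb1]
      simp only [hb, false_and, if_false]
      ring
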